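/- arXiv:2601.19879 — 11 statements merged into one kernel-verified Lean document; each statement's English description precedes it below -/
import Mathlib

section
/- Let k ≥ 1 and let f be a polynomial with integer coefficients. Then the sum over i from 0 to k-1 of (-1)^i * C(k-1, i) * (f(x) - i)^k equals k! * f(x) - k!(k-1)/2, as an identity of polynomials. -/
noncomputable def Sq (m n : ℕ) (x : ℚ) : ℚ :=
  ∑ i ∈ Finset.range (m+1), (-1:ℚ)^i * (Nat.choose m i : ℚ) * (x - i)^n

lemma Sq_rec (m n : ℕ) (x : ℚ) :
    Sq (m+1) (n+1) x = x * Sq (m+1) n x + (m+1) * Sq m n (x-1) := by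
  unfold Sq
  have h1 : ∀ i ∈ Finset.range (m+2),
      (-1:ℚ)^i * (Nat.choose (m+1) i : ℚ) * (x - i)^(n+1)
        = x * ((-1:ℚ)^i * (Nat.choose (m+1) i : ℚ) * (x - i)^n)
          - (-1:ℚ)^i * ((Nat.choose (m+1) i : ℚ) * i) * (x - i)^n := by
    intro i _
    ring
  rw [Finset.sum_congr rfl h1, Finset.sum_sub_distrib, ← Finset.mul_sum]
  rw [Finset.sum_range_succ' (fun i => (-1:ℚ)^i * ((Nat.choose (m+1) i : ℚ) * i) * (x - i)^n)]
  simp only [Nat.cast_zero, mul_zero, zero_mul, add_zero]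
  rw [sub_eq_add_neg, ← Finset.sum_neg_distrib]
  congr 1
  rw [Finset.mul_sum]
  apply Finset.sum_congr rfl
  intro j _
  have hc : ((m+1).choose (j+1) : ℚ) * (j+1) = (m+1) * (Nat.choose m j : ℚ) := by
    have := Nat.add_one_mul_choose_eq m j
    have : ((m+1) * m.choose j : ℚ) = ((m+1).choose (j+1) * (j+1) : ℚ) := by
      exact_mod_cast congrArg (Nat.cast : ℕ → ℚ) this
    linarith
  push_cast
  rw [hc]
  ring_nf

lemma Sq_zero : ∀ n m : ℕ, n < m → ∀ x : ℚ, Sq m n x = 0 := by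
  intro n
  induction n with
  | zero =>
    intro m hm x
    obtain ⟨m', rfl⟩ := Nat.exists_eq_add_of_lt hm
    unfold Sq
    have := Int.alternating_sum_range_choose (n := 0 + m' + 1)
    simp only [Nat.add_eq_zero, and_false, if_false] at this
    have h2 : ((∑ i ∈ Finset.range (0 + m' + 1 + 1), (-1:ℤ)^i * (0+m'+1).choose i : ℤ) : ℚ) = 0 := by
      rw [this]; norm_num
    push_cast at h2
    simpa using h2
  | succ n ih =>
    intro m hm x
    obtain ⟨m', rfl⟩ := Nat.exists_eq_add_of_lt hm
    have h := Sq_rec (n + m' + 1) n x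
    have e : n + 1 + m' = n + m' + 1 := by omega
    rw [e, h, ih _ (by omega), ih _ (by omega)]
    ring

lemma Sq_diag : ∀ (m : ℕ) (x : ℚ), Sq m m x = Nat.factorial m := by
  intro m
  induction m with
  | zero => intro x; simp [Sq]
  | succ m ih =>
    intro x
    rw [Sq_rec, Sq_zero m (m+1) (by omega), ih (x-1), mul_zero, zero_add,
      Nat.factorial_succ]
    push_cast
    ring

lemma Sq_succ_diag : ∀ (m : ℕ) (x : ℚ),
    Sq m (m+1) x = (Nat.factorial (m+1) : ℚ) * x - (Nat.factorial (m+1) : ℚ) * m / 2 := by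
  intro m
  induction m with
  | zero => intro x; simp [Sq]
  | succ m ih =>
    intro x
    rw [Sq_rec, Sq_diag, ih (x-1)]
    have h2 : (Nat.factorial (m+2) : ℚ) = (m+2) * Nat.factorial (m+1) := by
      rw [Nat.factorial_succ]; push_cast; ring
    push_cast [h2]
    ring

/-- Proposition (shifted k-th power sum identity): for `k ≥ 1` and `f ∈ ℤ[x]`,
`∑_{i=0}^{k-1} (-1)^i * C(k-1,i) * (f(x)-i)^k = k! * f(x) - k!(k-1)/2` in `ℚ[x]`. -/
theorem stmt_0 (k : ℕ) (hk : 1 ≤ k) (f : Polynomial ℤ) :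
    ∑ i ∈ Finset.range k,
        (-1 : Polynomial ℚ) ^ i * (Nat.choose (k - 1) i : Polynomial ℚ) *
          (f.map (Int.castRingHom ℚ) - (i : Polynomial ℚ)) ^ k
      = (Nat.factorial k : Polynomial ℚ) * f.map (Int.castRingHom ℚ)
        - Polynomial.C ((Nat.factorial k : ℚ) * ((k : ℚ) - 1) / 2) := by
  obtain ⟨m, rfl⟩ := Nat.exists_eq_add_of_le hk
  apply Polynomial.funext
  intro x
  simp only [Polynomial.eval_finset_sum, Polynomial.eval_mul, Polynomial.eval_pow,
    Polynomial.eval_sub, Polynomial.eval_natCast, Polynomial.eval_neg, Polynomial.eval_one,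
    Polynomial.eval_C]
  have key := Sq_succ_diag m (Polynomial.eval x (f.map (Int.castRingHom ℚ)))
  unfold Sq at key
  have e1 : 1 + m = m + 1 := by omega
  rw [e1]
  simp only [Nat.add_sub_cancel]
  rw [key]
  push_cast
  ring
end

section
/- Let q = q_0^k be a prime power and N: F_q → F_{q_0} the relative norm. Let t_1, ..., t_{k-1} ∈ F_{q_0} be pairwise distinct elements not in {0, 1}, set t_k = 1, and let A_i = ∏_{j≠i} t_j/(t_j - t_i). Then for every μ ∈ F_q, ∑_{i=1}^k A_i * N(1 + μ t_i) = 1 + c * N(μ), where c = (-1)^{k+1} ∏_{i=1}^k t_i is a nonzero element of F_{q_0}. -/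
open Polynomial Finset

-- auxiliary: Lagrange weight identity
theorem aux_key (F : Type*) [Field F] (k : ℕ) (t : Fin k → F)
    (hinj : Function.Injective t) (A : Fin k → F)
    (hA : ∀ i, A i = ∏ j ∈ Finset.univ.erase i, t j / (t j - t i))
    (f : F[X]) (hf : f.degree < k) :
    Polynomial.eval 0 f = ∑ i, f.eval (t i) * A i := by
  have hcard : (Finset.univ : Finset (Fin k)).card = k := by simp
  have h := Lagrange.eq_interpolate (s := Finset.univ) (v := t) hinj.injOn (by rw [hcard]; exact hf)
  conv_lhs => rw [h]
  rw [Lagrange.interpolate_apply, Polynomial.eval_finset_sum]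
  refine Finset.sum_congr rfl fun i _ => ?_
  rw [eval_mul, eval_C, hA]
  congr 1
  rw [Lagrange.basis, Polynomial.eval_prod]
  refine Finset.prod_congr rfl fun j hj => ?_
  have hji : t j ≠ t i := by
    intro h
    exact (Finset.mem_erase.mp hj).1 (hinj h)
  rw [Lagrange.basisDivisor, eval_mul, eval_C, eval_sub, eval_C, eval_X]
  rw [div_eq_mul_inv]
  have : (t j - t i) = -(t i - t j) := by ring
  rw [this, inv_neg]
  ring

theorem aux_W (F : Type*) [Field F] (k : ℕ) (hk : 2 ≤ k) (t : Fin k → F)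
    (hinj : Function.Injective t) (A : Fin k → F)
    (hA : ∀ i, A i = ∏ j ∈ Finset.univ.erase i, t j / (t j - t i))
    (c : F) (hc : c = (-1 : F) ^ (k + 1) * ∏ i, t i) :
    ∀ r : ℕ, r ≤ k → ∑ i, t i ^ r * A i = if r = 0 then 1 else if r = k then c else 0 := by
  intro r hr
  rcases lt_or_eq_of_le hr with hlt | rfl
  · have h := aux_key F k t hinj A hA (X ^ r) (by
      rw [degree_X_pow]; exact_mod_cast hlt)
    simp only [eval_pow, eval_X, eval_zero] at h
    rw [← h]
    rcases Nat.eq_zero_or_pos r with rfl | hrpos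
    · simp
    · rw [zero_pow hrpos.ne', if_neg hrpos.ne', if_neg (by omega)]
  · set P : F[X] := ∏ i, (X - C (t i)) with hP
    have hmon : P.Monic := monic_prod_of_monic _ _ fun i _ => monic_X_sub_C (t i)
    have hdeg : P.natDegree = r := by
      rw [hP, natDegree_prod _ _ (fun i _ => X_sub_C_ne_zero (t i))]
      simp
    have hdegP : P.degree = (r : WithBot ℕ) := by
      rw [degree_eq_natDegree hmon.ne_zero, hdeg]
    have hdlt : (X ^ r - P).degree < (r : WithBot ℕ) := by
      have := degree_sub_lt (p := (X : F[X]) ^ r) (q := P)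
        (by rw [degree_X_pow, hdegP]) (pow_ne_zero _ X_ne_zero) (by
          rw [leadingCoeff_X_pow, hmon.leadingCoeff])
      rwa [degree_X_pow] at this
    have h := aux_key F r t hinj A hA (X ^ r - P) hdlt
    have hevali : ∀ i : Fin r, (X ^ r - P).eval (t i) = t i ^ r := by
      intro i
      rw [eval_sub, eval_pow, eval_X, hP, eval_prod]
      rw [Finset.prod_eq_zero (Finset.mem_univ i) (by simp)]
      ring
    have heval0 : (X ^ r - P).eval 0 = c := by
      rw [eval_sub, eval_pow, eval_X, hP, eval_prod]
      simp only [eval_sub, eval_X, eval_C, zero_sub]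
      have : ∀ i : Fin r, -t i = (-1) * t i := fun i => by ring
      simp only [this, Finset.prod_mul_distrib, Finset.prod_const, Finset.card_univ,
        Fintype.card_fin]
      rw [hc, zero_pow (by omega), pow_succ]
      ring
    rw [heval0] at h
    rw [if_neg (by omega), if_pos rfl, h]
    exact Finset.sum_congr rfl fun i _ => by rw [hevali i]

/-- Norm cancellation: let `F` be a finite field with `|F| = q₀^k` and
`N(x) = ∏_{j<k} x^{q₀^j}` the norm to the subfield of order `q₀`. Let
`t₁, …, t_{k-1}` be pairwise distinct elements of the subfield not in `{0,1}`,
`t_k = 1`, and `A_i = ∏_{j≠i} t_j/(t_j - t_i)`. Then for every `μ ∈ F`,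
`∑_i A_i N(1 + μ t_i) = 1 + c N(μ)` where `c = (-1)^{k+1} ∏ t_i ≠ 0`. -/
theorem stmt_5 (F : Type*) [Field F] [Fintype F] (q0 k : ℕ) (hq0 : IsPrimePow q0)
    (hk : 2 ≤ k) (hcard : Fintype.card F = q0 ^ k)
    (t : Fin k → F)
    (hsub : ∀ i, t i ^ q0 = t i)
    (hlast : t ⟨k - 1, by omega⟩ = 1)
    (hdist : ∀ i j : Fin k, (i : ℕ) < k - 1 → (j : ℕ) < k - 1 → i ≠ j → t i ≠ t j)
    (hne : ∀ i : Fin k, (i : ℕ) < k - 1 → t i ≠ 0 ∧ t i ≠ 1)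
    (A : Fin k → F)
    (hA : ∀ i, A i = ∏ j ∈ Finset.univ.erase i, t j / (t j - t i))
    (c : F) (hc : c = (-1 : F) ^ (k + 1) * ∏ i, t i) :
    (∀ μ : F,
        ∑ i, A i * ∏ j ∈ Finset.range k, (1 + μ * t i) ^ (q0 ^ j)
          = 1 + c * ∏ j ∈ Finset.range k, μ ^ (q0 ^ j)) ∧
    c ≠ 0 := by
  classical
  -- injectivity of t
  have hinj : Function.Injective t := by
    intro i j hij
    by_contra hij'
    rcases lt_or_ge (i : ℕ) (k - 1) with hi | hi
    · rcases lt_or_ge (j : ℕ) (k - 1) with hj | hj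
      · exact hdist i j hi hj hij' hij
      · have hj' : j = ⟨k - 1, by omega⟩ := by
          apply Fin.ext; have := j.isLt; simp; omega
        rw [hj', hlast] at hij
        exact (hne i hi).2 hij
    · have hi' : i = ⟨k - 1, by omega⟩ := by
        apply Fin.ext; have := i.isLt; simp; omega
      rcases lt_or_ge (j : ℕ) (k - 1) with hj | hj
      · rw [hi', hlast] at hij
        exact (hne j hj).2 hij.symm
      · have hj' : j = ⟨k - 1, by omega⟩ := by
          apply Fin.ext; have := j.isLt; simp; omega
        exact hij' (hi'.trans hj'.symm)
  -- t i ≠ 0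
  have htne0 : ∀ i, t i ≠ 0 := by
    intro i
    rcases lt_or_ge (i : ℕ) (k - 1) with hi | hi
    · exact (hne i hi).1
    · have hi' : i = ⟨k - 1, by omega⟩ := by
        apply Fin.ext; have := i.isLt; simp; omega
      rw [hi', hlast]; exact one_ne_zero
  have hcne : c ≠ 0 := by
    rw [hc]
    apply mul_ne_zero
    · exact pow_ne_zero _ (neg_ne_zero.mpr one_ne_zero)
    · exact Finset.prod_ne_zero_iff.mpr fun i _ => htne0 i
  refine ⟨?_, hcne⟩
  -- Frobenius
  obtain ⟨p, s, hp, hs, hpq⟩ := hq0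
  have hpnat : Nat.Prime p := Nat.prime_iff.mpr hp
  haveI : Fact (Nat.Prime p) := ⟨hpnat⟩
  have hcharp : CharP F p := by
    set p' := ringChar F with hp'
    haveI : CharP F p' := ringChar.charP F
    obtain ⟨n, hp'prime, hcard'⟩ := FiniteField.card F p'
    have hdvd : p' ∣ p ^ (s * k) := by
      have he : p' ^ (n : ℕ) = p ^ (s * k) := by
        rw [← hcard', hcard, ← hpq, ← pow_mul]
      exact he ▸ dvd_pow_self p' n.2.ne' 
    have : p' = p := ((Nat.prime_dvd_prime_iff_eq hp'prime hpnat).mp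
      (hp'prime.dvd_of_dvd_pow hdvd))
    rw [← this]; exact ringChar.charP F
  haveI := hcharp
  have hfrob : ∀ (x y : F) (j : ℕ), (x + y) ^ q0 ^ j = x ^ q0 ^ j + y ^ q0 ^ j := by
    intro x y j
    have : q0 ^ j = p ^ (s * j) := by rw [← hpq, ← pow_mul]
    rw [this]
    exact add_pow_char_pow x y p (s * j)
  have htpow : ∀ (i : Fin k) (j : ℕ), t i ^ q0 ^ j = t i := by
    intro i j
    induction j with
    | zero => simp
    | succ j ih => rw [pow_succ, pow_mul, ih, hsub]
  intro μ
  set m : ℕ → F := fun j => μ ^ q0 ^ j with hm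
  -- rewrite the norm terms
  have hterm : ∀ (i : Fin k) (j : ℕ), (1 + μ * t i) ^ q0 ^ j = 1 + m j * t i := by
    intro i j
    rw [hfrob, one_pow, mul_pow, htpow, hm]
  have hW := aux_W F k hk t hinj A hA c hc
  set sR := Finset.range k with hsR
  calc ∑ i, A i * ∏ j ∈ sR, (1 + μ * t i) ^ q0 ^ j
      = ∑ i, A i * ∑ T ∈ sR.powerset, (∏ j ∈ T, (1:F)) * ∏ j ∈ sR \ T, (m j * t i) := by
        refine Finset.sum_congr rfl fun i _ => ?_
        congr 1
        rw [← Finset.prod_add (fun _ => (1:F)) (fun j => m j * t i) sR]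
        exact Finset.prod_congr rfl fun j _ => hterm i j
    _ = ∑ T ∈ sR.powerset, (∏ j ∈ sR \ T, m j) * ∑ i, t i ^ (sR \ T).card * A i := by
        simp only [Finset.mul_sum]
        rw [Finset.sum_comm]
        refine Finset.sum_congr rfl fun T _ => ?_
        refine Finset.sum_congr rfl fun i _ => ?_
        rw [Finset.prod_const_one, Finset.prod_mul_distrib, Finset.prod_const]
        ring
    _ = ∑ T ∈ sR.powerset, ((if T = sR then (1:F) else 0) +
          (if T = (∅ : Finset ℕ) then c * ∏ j ∈ sR, m j else 0)) := by
        refine Finset.sum_congr rfl fun T hT => ?_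
        have hTsub : T ⊆ sR := Finset.mem_powerset.mp hT
        have hrle : (sR \ T).card ≤ k := by
          calc (sR \ T).card ≤ sR.card := Finset.card_le_card (Finset.sdiff_subset)
          _ = k := Finset.card_range k
        rw [hW _ hrle]
        have hsRne : sR ≠ ∅ := Finset.nonempty_iff_ne_empty.mp
          (by rw [hsR, Finset.nonempty_range_iff]; omega)
        by_cases h1 : T = sR
        · subst h1
          rw [Finset.sdiff_self, Finset.card_empty, if_pos rfl, if_pos rfl,
            if_neg hsRne, Finset.prod_empty]
          ring
        · rw [if_neg h1]
          by_cases h2 : T = ∅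
          · subst h2
            rw [Finset.sdiff_empty, Finset.card_range]
            rw [if_neg (by omega), if_pos rfl]
            simp [mul_comm]
          · rw [if_neg h2]
            have hne0 : (sR \ T).card ≠ 0 := by
              intro h
              apply h1
              have := Finset.card_eq_zero.mp h
              have : sR ⊆ T := by
                intro x hx
                by_contra hxT
                have : x ∈ sR \ T := Finset.mem_sdiff.mpr ⟨hx, hxT⟩
                simp [Finset.card_eq_zero.mp h] at this
              exact Finset.Subset.antisymm hTsub this
            have hnek : (sR \ T).card ≠ k := by
              intro h
              apply h2
              have heq : sR \ T = sR := Finset.eq_of_subset_of_card_le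
                Finset.sdiff_subset (by rw [h, Finset.card_range])
              have : Disjoint sR T := Finset.sdiff_eq_self_iff_disjoint.mp heq
              exact Finset.eq_empty_of_forall_notMem fun x hx =>
                (Finset.disjoint_right.mp this hx) (hTsub hx)
            rw [if_neg hne0, if_neg hnek]
            ring
    _ = 1 + c * ∏ j ∈ sR, μ ^ q0 ^ j := by
        rw [Finset.sum_add_distrib, Finset.sum_ite_eq' sR.powerset sR fun _ => (1:F),
          Finset.sum_ite_eq' sR.powerset (∅ : Finset ℕ) fun _ => c * ∏ j ∈ sR, m j]
        rw [if_pos (Finset.mem_powerset.mpr (Finset.Subset.refl _)),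
          if_pos (Finset.mem_powerset.mpr (Finset.empty_subset _))]
end

section
/- If N ⊆ F_q^d is a weak Nikodym set, then N × F_q ⊆ F_q^{d+1} is a Nikodym set. -/
/-- `N` is a Nikodym set: through every point there is a punctured line inside `N`. -/
def IsNikodym (F V : Type*) [Field F] [AddCommGroup V] [Module F V] (N : Set V) : Prop :=
  ∀ x : V, ∃ v : V, v ≠ 0 ∧ ∀ t : F, t ≠ 0 → x + t • v ∈ N

/-- `N` is a weak Nikodym set: through every point outside `N` there is a punctured
line inside `N`. -/
def IsWeakNikodym (F V : Type*) [Field F] [AddCommGroup V] [Module F V] (N : Set V) : Prop :=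
  ∀ x : V, x ∉ N → ∃ v : V, v ≠ 0 ∧ ∀ t : F, t ≠ 0 → x + t • v ∈ N

/-- If `N ⊆ F_q^d` is a weak Nikodym set, then `N × F_q ⊆ F_q^{d+1}` is a Nikodym set. -/
theorem stmt_9 (F : Type*) [Field F] (d : ℕ) (N : Set (Fin d → F))
    (hN : IsWeakNikodym F (Fin d → F) N) :
    IsNikodym F ((Fin d → F) × F) (N ×ˢ (Set.univ : Set F)) := by
  rintro ⟨a, b⟩
  by_cases ha : a ∈ N
  · refine ⟨(0, 1), ?_, ?_⟩
    · simp [Prod.ext_iff]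
    · intro t ht
      simpa using ha
  · obtain ⟨v, hv, hline⟩ := hN a ha
    refine ⟨(v, 0), ?_, ?_⟩
    · simp [Prod.ext_iff, hv]
    · intro t ht
      simpa using hline t ht
end

section
/- Let q be a prime power with characteristic ≡ 1 mod 4, and let I ⊆ F_q be a set such that no difference of two distinct elements of I is a nonzero square in F_q. Then the set P = {(x,y) ∈ F_q^2 : x + y^2 ∈ I}, together with the lines ℓ_{x,y} = {(x - 2λy, y + λ) : λ ∈ F_q}, forms an induced matching of size q·|I| in the point-line incidence graph of F_q^2; i.e., each line ℓ_{x,y} meets P only in the point (x,y). -/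
open Finset

/-- Paley lifting (Sz\H{o}nyi): let `F` be a finite field whose characteristic is
`≡ 1 (mod 4)` and let `I ⊆ F` be such that no difference of two distinct elements
of `I` is a nonzero square. Then `P = {(x,y) : x + y² ∈ I}` together with the
lines `ℓ_{x,y} = {(x - 2λy, y + λ) : λ ∈ F}` forms an induced matching of size
`q·|I|`: each line `ℓ_{x,y}` meets `P` only at `(x,y)`, and `|P| = q·|I|`. -/
theorem stmt_10 (F : Type*) [Field F] [Fintype F] [DecidableEq F]
    (hchar : ringChar F % 4 = 1)
    (I : Finset F)
    (hI : ∀ a ∈ I, ∀ b ∈ I, a ≠ b → ∀ s : F, s ≠ 0 → a - b ≠ s ^ 2) :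
    (∀ x y : F, x + y ^ 2 ∈ I →
      ∀ l : F, (x - 2 * l * y) + (y + l) ^ 2 ∈ I → l = 0) ∧
    (Finset.univ.filter (fun p : F × F => p.1 + p.2 ^ 2 ∈ I)).card
      = Fintype.card F * I.card := by
  constructor
  · intro x y hxy l hl
    by_contra hne
    have hkey : (x - 2 * l * y) + (y + l) ^ 2 = (x + y ^ 2) + l ^ 2 := by ring
    have hd : ((x - 2 * l * y) + (y + l) ^ 2) - (x + y ^ 2) = l ^ 2 := by
      rw [hkey]; ring
    have hne2 : (x - 2 * l * y) + (y + l) ^ 2 ≠ x + y ^ 2 := by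
      intro h
      apply hne
      have : l ^ 2 = 0 := by rw [← hd, h, sub_self]
      exact pow_eq_zero_iff (n := 2) (by norm_num) |>.mp this
    exact hI _ hl _ hxy hne2 l hne hd
  · have : (Finset.univ.filter (fun p : F × F => p.1 + p.2 ^ 2 ∈ I)).card
        = ((Finset.univ : Finset F) ×ˢ I).card := by
      apply Finset.card_bij' (fun p _ => (p.2, p.1 + p.2 ^ 2))
        (fun p _ => (p.2 - p.1 ^ 2, p.1))
      · intro p hp; simp
      · intro p hp; simp
      · intro p hp
        simp only [Finset.mem_filter, Finset.mem_univ, true_and] at hp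
        simp [hp]
      · intro p hp
        simp only [Finset.mem_product, Finset.mem_univ, true_and] at hp
        simp [hp]
    rw [this, Finset.card_product, Finset.card_univ]
end

section
/- Let q be a prime, N = ⌊q/3⌋, M = ⌊√q/2⌋, and let A ⊆ {1, ..., ⌊q/10⌋} be a set such that the difference of any two distinct elements of A is never a perfect square. Define P = {(x,y) ∈ [N] × [M] : 2x - y^2 ∈ A} and for p = (x,y) ∈ P the line ℓ_p = {(x + ty, y + t) : t ∈ F_q} (reduced mod q). Then for distinct p, p' ∈ P, p' does not lie on ℓ_p over F_q; i.e., these pairs form an induced matching in the point-line incidence graph of F_q^2. -/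
/-- Ruzsa lifting: let `q` be a prime, `N = ⌊q/3⌋`, `M = ⌊√q⌋/2`, and let
`A ⊆ {1,…,⌊q/10⌋}` be square-difference-free. If `(x,y), (x',y') ∈ [N] × [M]`
satisfy `2x - y² ∈ A` and `2x' - y'² ∈ A`, and `(x',y')` lies on the line
`{(x + ty, y + t) : t}` over `F_q`, then `(x,y) = (x',y')`; i.e. these pairs form
an induced matching in the point–line incidence graph of `F_q²`. -/
theorem stmt_11 (q : ℕ) (hq : q.Prime)
    (A : Finset ℤ) (hA : A ⊆ Finset.Icc 1 ((q : ℤ) / 10))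
    (hsdf : ∀ a ∈ A, ∀ b ∈ A, a ≠ b → ∀ m : ℤ, a - b ≠ m ^ 2)
    (x y x' y' : ℤ)
    (hx : x ∈ Finset.Icc 1 ((q : ℤ) / 3))
    (hx' : x' ∈ Finset.Icc 1 ((q : ℤ) / 3))
    (hy : y ∈ Finset.Icc 1 ((Nat.sqrt q / 2 : ℕ) : ℤ))
    (hy' : y' ∈ Finset.Icc 1 ((Nat.sqrt q / 2 : ℕ) : ℤ))
    (hxy : 2 * x - y ^ 2 ∈ A) (hxy' : 2 * x' - y' ^ 2 ∈ A)
    (t : ZMod q)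
    (h1 : (x' : ZMod q) = (x : ZMod q) + t * (y : ZMod q))
    (h2 : (y' : ZMod q) = (y : ZMod q) + t) :
    x = x' ∧ y = y' := by
  have hqpos : 0 < (q : ℤ) := by exact_mod_cast hq.pos
  simp only [Finset.mem_Icc] at hx hx' hy hy'
  have ha := Finset.mem_Icc.mp (hA hxy)
  have ha' := Finset.mem_Icc.mp (hA hxy')
  -- divisibility
  have key : (q : ℤ) ∣ ((2 * x - y ^ 2) - (2 * x' - y' ^ 2) - (y' - y) ^ 2) := by
    rw [← ZMod.intCast_zmod_eq_zero_iff_dvd]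
    push_cast
    rw [h1, h2]
    ring
  -- bound on squares
  set M : ℤ := ((Nat.sqrt q / 2 : ℕ) : ℤ) with hM
  have h4M : 4 * M ^ 2 ≤ (q : ℤ) := by
    have h1' : 2 * (Nat.sqrt q / 2) ≤ Nat.sqrt q := by omega
    have h2' : Nat.sqrt q * Nat.sqrt q ≤ q := Nat.sqrt_le q
    have hnat : 4 * (Nat.sqrt q / 2) * (Nat.sqrt q / 2) ≤ q := by
      calc 4 * (Nat.sqrt q / 2) * (Nat.sqrt q / 2)
          = (2 * (Nat.sqrt q / 2)) * (2 * (Nat.sqrt q / 2)) := by ring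
        _ ≤ Nat.sqrt q * Nat.sqrt q := Nat.mul_le_mul h1' h1'
        _ ≤ q := h2'
    have hint : 4 * M * M ≤ (q : ℤ) := by rw [hM]; exact_mod_cast hnat
    nlinarith [hint]
  have hsq : (y' - y) ^ 2 ≤ M ^ 2 := by
    have hM1 : 1 ≤ M := le_trans hy.1 hy.2
    nlinarith [hy.1, hy.2, hy'.1, hy'.2]
  have hsqnn : 0 ≤ (y' - y) ^ 2 := sq_nonneg _
  -- the congruence is an equality
  have heq : (2 * x - y ^ 2) - (2 * x' - y' ^ 2) - (y' - y) ^ 2 = 0 := by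
    apply Int.eq_zero_of_abs_lt_dvd key
    rw [abs_lt]
    constructor <;> omega
  -- square-difference-free forces equality
  have haa : (2 * x - y ^ 2) = (2 * x' - y' ^ 2) := by
    by_contra hne
    exact hsdf _ hxy _ hxy' hne (y' - y) (by omega)
  have hyy : y = y' := by nlinarith
  have ht : t = 0 := by
    have := h2
    rw [hyy] at this
    linear_combination -this
  rw [ht, zero_mul, add_zero] at h1
  have hx'' : (q : ℤ) ∣ (x - x') := by
    rw [← ZMod.intCast_zmod_eq_zero_iff_dvd]
    push_cast
    rw [h1]
    ring
  have : x - x' = 0 := by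
    apply Int.eq_zero_of_abs_lt_dvd hx''
    rw [abs_lt]
    constructor <;> omega
  exact ⟨by omega, hyy⟩
end

section
/- Suppose q = p^s is a prime power and there is an induced matching of size m in the point-line incidence graph of F_p^{d_0}. Then there is an induced matching of size m^s · q^{(s-1)d_0} in the point-line incidence graph of F_q^{s·d_0}. Consequently IM(s·d_0, q) ≥ IM(d_0, p)^s · q^{(s-1)d_0}. -/
/-- There is an induced matching of size `m` in the point–line incidence graph of
`F^d`: points `p i` with lines `ℓ_i` through `p i` in direction `v i ≠ 0`, such
that `p i ∈ ℓ_j` iff `i = j`. -/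
def HasInducedMatching (F : Type*) [Field F] (d m : ℕ) : Prop :=
  ∃ (p : Fin m → (Fin d → F)) (v : Fin m → (Fin d → F)),
    (∀ i, v i ≠ 0) ∧ ∀ i j : Fin m, (∃ t : F, p i = p j + t • v j) ↔ i = j

theorem aux_lift (p s' d0 m : ℕ) [hp : Fact p.Prime] (F : Type*) [Field F]
    [Algebra (ZMod p) F] (b : Module.Basis (Fin (s' + 1)) (ZMod p) F)
    (h : HasInducedMatching (ZMod p) d0 m) :
    HasInducedMatching F ((s' + 1) * d0) (m ^ (s' + 1) * (p ^ (s' + 1)) ^ (s' * d0)) := by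
  classical
  obtain ⟨P, V, hV, hPV⟩ := h
  have hcardI : Fintype.card (Fin (m ^ (s' + 1) * (p ^ (s' + 1)) ^ (s' * d0))) =
      Fintype.card ((Fin (s' + 1) → Fin m) × (Fin (s' + 1) → Fin s' → Fin d0 → ZMod p)) := by
    simp only [Fintype.card_prod, Fintype.card_fun, Fintype.card_fin, ZMod.card]
    rw [← pow_mul, ← pow_mul, ← pow_mul]
    congr 1
    ring
  let e : Fin (m ^ (s' + 1) * (p ^ (s' + 1)) ^ (s' * d0)) ≃
      ((Fin (s' + 1) → Fin m) × (Fin (s' + 1) → Fin s' → Fin d0 → ZMod p)) :=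
    Fintype.equivOfCardEq hcardI
  -- decode a coordinate of `F^{S·d0}` into (block, inner coordinate)
  let dec : Fin ((s' + 1) * d0) → Fin (s' + 1) × Fin d0 := fun x => finProdFinEquiv.symm x
  -- the π-coefficient data of the points
  let M : (Fin (s' + 1) → Fin m) → (Fin (s' + 1) → Fin s' → Fin d0 → ZMod p) →
      Fin (s' + 1) → Fin (s' + 1) → Fin d0 → ZMod p :=
    fun a w k => k.insertNth (P (a k)) (w k)
  let P' : ((Fin (s' + 1) → Fin m) × (Fin (s' + 1) → Fin s' → Fin d0 → ZMod p)) →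
      Fin ((s' + 1) * d0) → F := fun iw x =>
    b.equivFun.symm (fun r => M iw.1 iw.2 (dec x).1 r (dec x).2)
  let V' : ((Fin (s' + 1) → Fin m) × (Fin (s' + 1) → Fin s' → Fin d0 → ZMod p)) →
      Fin ((s' + 1) * d0) → F := fun iw x =>
    algebraMap (ZMod p) F (V (iw.1 (dec x).1) (dec x).2)
  have halg : Function.Injective (algebraMap (ZMod p) F) := (algebraMap (ZMod p) F).injective
  -- the key incidence computation on the index type
  have key : ∀ iw ju, (∃ t : F, P' iw = P' ju + t • V' ju) ↔ iw = ju := by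
    rintro ⟨a, w⟩ ⟨c, u⟩
    constructor
    · rintro ⟨t, ht⟩
      -- coordinatewise consequences
      have coord : ∀ (k : Fin (s' + 1)) (r : Fin (s' + 1)) (cc : Fin d0),
          M a w k r cc = M c u k r cc + V (c k) cc * b.equivFun t r := by
        intro k r cc
        have h1 := congrFun ht (finProdFinEquiv (k, cc))
        have hdec : dec (finProdFinEquiv (k, cc)) = (k, cc) := Equiv.symm_apply_apply _ _
        simp only [P', V', hdec, Pi.add_apply, Pi.smul_apply, smul_eq_mul] at h1
        have h2 : t * (algebraMap (ZMod p) F) (V (c k) cc) = V (c k) cc • t := by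
          rw [mul_comm, ← Algebra.smul_def]
        rw [h2] at h1
        have h3 := congrFun (congrArg (⇑b.equivFun) h1) r
        rw [map_add, map_smul, LinearEquiv.apply_symm_apply, LinearEquiv.apply_symm_apply] at h3
        simpa only [Pi.add_apply, Pi.smul_apply, smul_eq_mul] using h3
      -- diagonal: forces `a = c` and `π_r t = 0` for all r
      have hdiag : ∀ r : Fin (s' + 1), a r = c r ∧ b.equivFun t r = 0 := by
        intro r
        have hr : P (a r) = P (c r) + b.equivFun t r • V (c r) := by
          funext cc
          have hco := coord r r cc
          simpa [M, Fin.insertNth_apply_same, Pi.add_apply, Pi.smul_apply, smul_eq_mul,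
            mul_comm] using hco
        have hac : a r = c r := (hPV (a r) (c r)).mp ⟨_, hr⟩
        refine ⟨hac, ?_⟩
        rw [hac] at hr
        have h0 : b.equivFun t r • V (c r) = 0 := by
          have hr' := hr.symm
          rwa [add_eq_left] at hr'
        rcases smul_eq_zero.mp h0 with h | h
        · exact h
        · exact absurd h (hV (c r))
      have hac : a = c := funext fun r => (hdiag r).1
      have hw : w = u := by
        funext k j cc
        have hco := coord k (k.succAbove j) cc
        rw [(hdiag (k.succAbove j)).2] at hco
        simpa [M, Fin.insertNth_apply_succAbove] using hco
      rw [hac, hw]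
    · intro hh
      exact ⟨0, by rw [hh]; simp⟩
  refine ⟨P' ∘ e, V' ∘ e, ?_, ?_⟩
  · intro i hzero
    obtain ⟨cc, hcc⟩ : ∃ cc, V ((e i).1 0) cc ≠ 0 := by
      by_contra hcon
      push_neg at hcon
      exact hV ((e i).1 0) (funext hcon)
    have hz := congrFun hzero (finProdFinEquiv ((0 : Fin (s' + 1)), cc))
    have hdec : dec (finProdFinEquiv ((0 : Fin (s' + 1)), cc)) = (0, cc) :=
      Equiv.symm_apply_apply _ _
    simp only [Function.comp_apply, V', hdec, Pi.zero_apply] at hz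
    exact hcc (halg (by simpa using hz))
  · intro i j
    rw [Function.comp_apply, Function.comp_apply, Function.comp_apply, key (e i) (e j)]
    exact ⟨fun hh => e.injective hh, fun hh => by rw [hh]⟩

/-- Lifting matchings from prime fields to prime power fields: if `q = p^s` and
there is an induced matching of size `m` in `F_p^{d₀}`, then there is an induced
matching of size `m^s · q^{(s-1)d₀}` in `F_q^{s·d₀}`. -/
theorem stmt_12 (p s d0 m : ℕ) [hp : Fact p.Prime] (F : Type*) [Field F] [Fintype F]
    (hcard : Fintype.card F = p ^ s)
    (h : HasInducedMatching (ZMod p) d0 m) :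
    HasInducedMatching F (s * d0) (m ^ s * (p ^ s) ^ ((s - 1) * d0)) := by
  obtain rfl | hs := Nat.eq_zero_or_pos s
  · exfalso
    rw [pow_zero] at hcard
    have := Fintype.one_lt_card (α := F)
    omega
  obtain ⟨s', rfl⟩ : ∃ s', s = s' + 1 := ⟨s - 1, by omega⟩
  -- characteristic of F is p
  have hchar : CharP F p := by
    have h1 : (ringChar F).Prime := CharP.char_is_prime F _
    have h2 : (ringChar F) ∣ p ^ (s' + 1) := by
      rw [← hcard, ← CharP.cast_eq_zero_iff F (ringChar F)]
      exact FiniteField.cast_card_eq_zero F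
    have h3 : ringChar F = p :=
      (Nat.prime_dvd_prime_iff_eq h1 hp.out).mp (h1.dvd_of_dvd_pow h2)
    exact h3 ▸ ringChar.charP F
  letI : Algebra (ZMod p) F := ZMod.algebra _ _
  haveI : Module.Finite (ZMod p) F := Module.Finite.of_finite
  have hfr : Module.finrank (ZMod p) F = s' + 1 := by
    have hc : Fintype.card F = p ^ Module.finrank (ZMod p) F := by
      have := Module.card_eq_pow_finrank (K := ZMod p) (V := F)
      rwa [ZMod.card] at this
    rw [hcard] at hc
    exact (Nat.pow_right_injective hp.out.two_le hc.symm)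
  let b : Module.Basis (Fin (s' + 1)) (ZMod p) F :=
    (Module.finBasis (ZMod p) F).reindex (finCongr hfr)
  have := aux_lift p s' d0 m F b h
  simpa using this
end

section
/- For all integers d ≥ 2 and prime powers q, IM(d, q) ≥ q · IM(d-1, q): given an induced matching of size m in the point-line incidence graph of F_q^{d-1}, one obtains an induced matching of size q·m in F_q^d by taking the Cartesian product with F_q. -/
/-- `IM(d, q) ≥ q · IM(d-1, q)`: an induced matching of size `m` in `F_q^{d-1}`
lifts, by taking a Cartesian product with `F_q`, to one of size `q·m` in `F_q^d`. -/
theorem stmt_13 (F : Type*) [Field F] [Fintype F] (d m : ℕ) (hd : 2 ≤ d)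
    (h : HasInducedMatching F (d - 1) m) :
    HasInducedMatching F d (Fintype.card F * m) := by
  obtain ⟨d', rfl⟩ : ∃ d', d = d' + 1 := ⟨d - 1, by omega⟩
  simp only [Nat.add_sub_cancel] at h
  obtain ⟨p, v, hv, hpv⟩ := h
  set e : Fin (Fintype.card F * m) ≃ Fin (Fintype.card F) × Fin m :=
    finProdFinEquiv.symm with he
  set φ : Fin (Fintype.card F) → F := fun a => (Fintype.equivFin F).symm a with hφ
  refine ⟨fun k => Fin.snoc (p (e k).2) (φ (e k).1),
          fun k => Fin.snoc (v (e k).2) 0, ?_, ?_⟩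
  · intro k hk
    obtain ⟨j, hj⟩ : ∃ j, v (e k).2 j ≠ 0 := by
      by_contra hc
      push_neg at hc
      exact hv _ (funext hc)
    apply hj
    have := congrFun hk (Fin.castSucc j)
    simpa [Fin.snoc_castSucc] using this
  · intro k l
    constructor
    · rintro ⟨t, ht⟩
      have hlast := congrFun ht (Fin.last d')
      simp only [Fin.snoc_last, Pi.add_apply, Pi.smul_apply, smul_eq_mul,
        mul_zero, add_zero] at hlast
      have ha : (e k).1 = (e l).1 := (Fintype.equivFin F).symm.injective hlast
      have hi : (e k).2 = (e l).2 := by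
        apply (hpv _ _).mp
        refine ⟨t, funext fun j => ?_⟩
        have := congrFun ht (Fin.castSucc j)
        simpa [Fin.snoc_castSucc] using this
      exact e.injective (Prod.ext ha hi)
    · rintro rfl
      refine ⟨0, funext fun j => ?_⟩
      simp
end

section
/- Let k be a positive integer, p a prime with p ≡ 1 (mod 2k), and A_p ⊂ ℤ/pℤ a set of size ≥ k whose difference set avoids nonzero k-th powers mod p. For a positive integer N, let L = ⌊log_p N⌋ and let A ⊂ [N] be the set of integers of the form 1 + ∑_{i=0}^{L-1} c_i p^i with digits c_i ∈ {0, ..., p-1} for all i, and c_i ∈ A_p (viewed as digits) whenever k divides i. Then A - A contains no nonzero perfect k-th power, and |A| ≥ p^{L-⌈L/k⌉} · k^{⌈L/k⌉}. -/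
open Finset

private lemma digitSum_lt {p : ℕ} (hp : 2 ≤ p) (L : ℕ) (c : ℕ → ℕ) (hc : ∀ i, c i < p) :
    ∑ i ∈ range L, c i * p ^ i < p ^ L := by
  induction L with
  | zero => simp
  | succ n ih =>
    rw [Finset.sum_range_succ, pow_succ]
    have h1 : (c n + 1) * p ^ n ≤ p ^ n * p := by
      rw [mul_comm (p ^ n) p]
      exact Nat.mul_le_mul_right _ (hc n)
    nlinarith [pow_pos (by omega : 0 < p) n]

private lemma digits_unique {p : ℕ} (hp : 2 ≤ p) :
    ∀ L (c d : ℕ → ℕ), (∀ i, c i < p) → (∀ i, d i < p) →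
    (∑ i ∈ range L, c i * p ^ i) = (∑ i ∈ range L, d i * p ^ i) →
    ∀ i < L, c i = d i := by
  intro L
  induction L with
  | zero => intro c d _ _ _ i hi; omega
  | succ n ih =>
    intro c d hc hd hsum i hi
    rw [Finset.sum_range_succ', Finset.sum_range_succ'] at hsum
    have hre : ∀ e : ℕ → ℕ, ∑ i ∈ range n, e (i+1) * p ^ (i+1)
        = (∑ i ∈ range n, e (i+1) * p ^ i) * p := by
      intro e
      rw [Finset.sum_mul]
      exact Finset.sum_congr rfl fun i _ => by rw [pow_succ, mul_assoc]
    rw [hre c, hre d, pow_zero, mul_one, mul_one] at hsum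
    have h0 : c 0 = d 0 := by
      have h := congrArg (· % p) hsum
      simpa [Nat.add_mul_mod_self_right, add_comm,
        Nat.mod_eq_of_lt (hc 0), Nat.mod_eq_of_lt (hd 0)] using h
    have htail : (∑ i ∈ range n, c (i+1) * p ^ i) = ∑ i ∈ range n, d (i+1) * p ^ i := by
      have h2 : (∑ i ∈ range n, c (i+1) * p ^ i) * p
          = (∑ i ∈ range n, d (i+1) * p ^ i) * p := by omega
      exact Nat.eq_of_mul_eq_mul_right (by omega) h2
    match i with
    | 0 => exact h0
    | Nat.succ t =>
      exact ih (fun i => c (i+1)) (fun i => d (i+1)) (fun i => hc _) (fun i => hd _)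
        htail t (by omega)

private lemma sub_sum_eq {p L j : ℕ} (c d : ℕ → ℕ) (hj : j < L) (hmin : ∀ i < j, c i = d i) :
    (∑ i ∈ range L, (c i : ℤ) * (p : ℤ) ^ i) - ∑ i ∈ range L, (d i : ℤ) * (p : ℤ) ^ i
      = (p : ℤ) ^ j * ∑ t ∈ range (L - j), ((c (j+t) : ℤ) - d (j+t)) * (p : ℤ) ^ t := by
  rw [← Finset.sum_sub_distrib]
  have h1 : ∑ i ∈ range L, ((c i : ℤ) * (p:ℤ) ^ i - (d i : ℤ) * (p:ℤ) ^ i)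
      = ∑ i ∈ Finset.Ico j L, ((c i : ℤ) - d i) * (p:ℤ) ^ i := by
    rw [← Finset.sum_range_add_sum_Ico _ (le_of_lt hj)]
    have hz : ∑ i ∈ range j, ((c i : ℤ) * (p:ℤ) ^ i - (d i : ℤ) * (p:ℤ) ^ i) = 0 :=
      Finset.sum_eq_zero fun i hi => by rw [hmin i (Finset.mem_range.mp hi)]; ring
    rw [hz, zero_add]
    exact Finset.sum_congr rfl fun i _ => by ring
  rw [h1, Finset.sum_Ico_eq_sum_range, Finset.mul_sum]
  exact Finset.sum_congr rfl fun t _ => by rw [pow_add]; ring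

private lemma sum_cast_zmod {p M : ℕ} [NeZero p] (hM : 0 < M) (D : ℕ → ℤ) :
    ((∑ t ∈ range M, D t * (p:ℤ) ^ t : ℤ) : ZMod p) = (D 0 : ZMod p) := by
  push_cast
  rw [Finset.sum_eq_single_of_mem 0 (Finset.mem_range.mpr hM)]
  · simp
  · intro t _ ht
    have h0 : ((p : ZMod p)) = 0 := ZMod.natCast_self p
    rw [h0, zero_pow ht, mul_zero]

private lemma card_multiples_range {k L : ℕ} (hk : 1 ≤ k) :
    ((range L).filter (fun i => k ∣ i)).card = (L + k - 1) / k := by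
  have hiff : ∀ t : ℕ, t < (L + k - 1) / k ↔ k * t < L := by
    intro t
    rw [Nat.lt_iff_add_one_le, Nat.le_div_iff_mul_le (by omega : 0 < k), add_one_mul,
      mul_comm t k]
    generalize k * t = u
    omega
  have himg : (range L).filter (fun i => k ∣ i) = (range ((L + k - 1) / k)).image (k * ·) := by
    ext i
    simp only [Finset.mem_filter, Finset.mem_range, Finset.mem_image]
    constructor
    · rintro ⟨hiL, t, rfl⟩
      exact ⟨t, (hiff t).mpr hiL, rfl⟩
    · rintro ⟨t, ht, rfl⟩
      exact ⟨(hiff t).mp ht, t, rfl⟩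
  rw [himg, Finset.card_image_of_injective _ (mul_right_injective₀ (by omega : k ≠ 0)),
    Finset.card_range]

/-- Ruzsa's base-`p` construction for `k`-th powers: let `p ≡ 1 (mod 2k)` be prime
and `A_p ⊆ ℤ/pℤ` a set of size `≥ k` whose difference set avoids nonzero `k`-th
powers. For `N ≥ 1`, let `L = ⌊log_p N⌋` and let `A ⊆ [N]` consist of the integers
`1 + ∑_{i<L} c_i p^i` with digits `c_i ∈ {0,…,p-1}` such that `c_i ∈ A_p` whenever
`k ∣ i`. Then `A - A` contains no nonzero perfect `k`-th power, and
`|A| ≥ p^{L-⌈L/k⌉} · k^{⌈L/k⌉}`. -/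
theorem stmt_15 (k p N : ℕ) (hk : 1 ≤ k) (hp : p.Prime) (hmod : p % (2 * k) = 1)
    (hN : 1 ≤ N)
    (Ap : Finset (ZMod p)) (hcard : k ≤ Ap.card)
    (hAp : ∀ a ∈ Ap, ∀ b ∈ Ap, a ≠ b → ∀ s : ZMod p, a - b ≠ s ^ k) :
    let L := Nat.log p N
    let A : Set ℕ := {n | ∃ c : ℕ → ℕ, (∀ i, c i < p) ∧
      (∀ i, i < L → k ∣ i → ((c i : ZMod p) ∈ Ap)) ∧
      n = 1 + ∑ i ∈ Finset.range L, c i * p ^ i}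
    (A ⊆ Set.Icc 1 N) ∧
    (∀ a ∈ A, ∀ b ∈ A, ∀ m : ℤ, m ≠ 0 → (a : ℤ) - (b : ℤ) ≠ m ^ k) ∧
    p ^ (L - (L + k - 1) / k) * k ^ ((L + k - 1) / k) ≤ A.ncard := by
  intro L A
  have hp2 : 2 ≤ p := hp.two_le
  haveI : NeZero p := ⟨by omega⟩
  have hsub : A ⊆ Set.Icc 1 N := by
    rintro n ⟨c, hc, -, rfl⟩
    refine Set.mem_Icc.mpr ⟨Nat.le_add_right 1 _, ?_⟩
    have h1 := digitSum_lt hp2 L c hc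
    have h2 : p ^ L ≤ N := Nat.pow_log_le_self p (by omega)
    omega
  refine ⟨hsub, ?_, ?_⟩
  · -- no nonzero k-th power differences
    rintro a ⟨c, hc, hcA, rfl⟩ b ⟨d, hd, hdA, rfl⟩ m hm heq
    by_cases hall : ∀ i < L, c i = d i
    · have hss : ∑ i ∈ Finset.range L, c i * p ^ i = ∑ i ∈ Finset.range L, d i * p ^ i :=
        Finset.sum_congr rfl fun i hi => by rw [hall i (Finset.mem_range.mp hi)]
      rw [hss, sub_self] at heq
      exact hm ((pow_eq_zero_iff (by omega : k ≠ 0)).mp heq.symm)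
    · push_neg at hall
      have hex : ∃ i, i < L ∧ c i ≠ d i := by
        obtain ⟨i, h1, h2⟩ := hall; exact ⟨i, h1, h2⟩
      classical
      set j := Nat.find hex with hjdef
      obtain ⟨hjL, hjne⟩ := Nat.find_spec hex
      have hmin : ∀ i < j, c i = d i := by
        intro i hi
        by_contra hne
        exact Nat.find_min hex hi ⟨lt_trans hi hjL, hne⟩
      have hx : (↑(1 + ∑ i ∈ Finset.range L, c i * p ^ i) : ℤ)
            - ↑(1 + ∑ i ∈ Finset.range L, d i * p ^ i)
          = (p:ℤ) ^ j * ∑ t ∈ Finset.range (L - j), ((c (j+t) : ℤ) - d (j+t)) * (p:ℤ) ^ t := by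
        push_cast
        rw [add_sub_add_left_eq_sub]
        exact sub_sum_eq c d hjL hmin
      rw [hx] at heq
      set S := ∑ t ∈ Finset.range (L - j), ((c (j+t) : ℤ) - d (j+t)) * (p:ℤ) ^ t with hSdef
      have hScast : ((S : ℤ) : ZMod p) = (c j : ZMod p) - (d j : ZMod p) := by
        have h := sum_cast_zmod (p := p) (M := L - j) (by omega)
          (fun t => (c (j+t) : ℤ) - d (j+t))
        simp only [Nat.add_zero] at h
        rw [hSdef, h]
        push_cast
        ring
      have hcdne : (c j : ZMod p) ≠ (d j : ZMod p) := by
        intro h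
        apply hjne
        have h2 := congrArg ZMod.val h
        rwa [ZMod.val_cast_of_lt (hc j), ZMod.val_cast_of_lt (hd j)] at h2
      have hpS : ¬ (p:ℤ) ∣ S := by
        intro h
        have h0 : ((S : ℤ) : ZMod p) = 0 := (ZMod.intCast_zmod_eq_zero_iff_dvd S p).mpr h
        rw [hScast] at h0
        exact hcdne (sub_eq_zero.mp h0)
      have hm0 : m.natAbs ≠ 0 := Int.natAbs_ne_zero.mpr hm
      set e := m.natAbs.factorization p with he
      have hdvd : (p:ℤ) ^ e ∣ m := by
        have h1 : p ^ e ∣ m.natAbs := Nat.ordProj_dvd _ _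
        exact Int.dvd_natAbs.mp (by exact_mod_cast Int.natCast_dvd_natCast.mpr h1)
      obtain ⟨m', hm'⟩ := hdvd
      have hpm' : ¬ (p:ℤ) ∣ m' := by
        intro h
        have hd1 : (p:ℤ) ^ (e+1) ∣ m := by
          rw [hm', pow_succ]
          exact mul_dvd_mul_left _ h
        have h2 : p ^ (e+1) ∣ m.natAbs := by
          have h3 := Int.natAbs_dvd_natAbs.mpr hd1
          rwa [Int.natAbs_pow, Int.natAbs_natCast] at h3
        exact Nat.pow_succ_factorization_not_dvd hm0 hp h2
      have heq2 : (p:ℤ) ^ j * S = (p:ℤ) ^ (k*e) * m' ^ k := by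
        rw [heq, hm', mul_pow, ← pow_mul, mul_comm e k]
      have hpne : (p:ℤ) ≠ 0 := by exact_mod_cast (by omega : p ≠ 0)
      have hjke : j = k * e := by
        rcases lt_trichotomy j (k*e) with h | h | h
        · exfalso
          have hEq : (p:ℤ) ^ j * S = (p:ℤ) ^ j * ((p:ℤ) ^ (k*e - j) * m' ^ k) := by
            rw [heq2, ← mul_assoc, ← pow_add]
            congr 2
            omega
          have hSe := mul_left_cancel₀ (pow_ne_zero j hpne) hEq
          apply hpS
          rw [hSe]
          exact Dvd.dvd.mul_right (dvd_pow_self _ (by omega)) _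
        · exact h
        · exfalso
          have hEq : (p:ℤ) ^ (k*e) * m' ^ k = (p:ℤ) ^ (k*e) * ((p:ℤ) ^ (j - k*e) * S) := by
            rw [← heq2, ← mul_assoc, ← pow_add]
            congr 2
            omega
          have hme := mul_left_cancel₀ (pow_ne_zero _ hpne) hEq
          have hdp : (p:ℤ) ∣ m' ^ k := by
            rw [hme]
            exact Dvd.dvd.mul_right (dvd_pow_self _ (by omega)) _
          exact hpm' ((Nat.prime_iff_prime_int.mp hp).dvd_of_dvd_pow hdp)
      have hSm : S = m' ^ k := by
        apply mul_left_cancel₀ (pow_ne_zero j hpne)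
        rw [heq2, hjke]
      have hfin : (c j : ZMod p) - (d j : ZMod p) = ((m' : ZMod p)) ^ k := by
        have h := congrArg (fun z : ℤ => (z : ZMod p)) hSm
        rw [hScast] at h
        push_cast at h
        exact h
      exact hAp _ (hcA j hjL ⟨e, hjke⟩) _ (hdA j hjL ⟨e, hjke⟩) hcdne (m' : ZMod p) hfin
  · -- cardinality
    classical
    set D : ℕ → Finset ℕ := fun i => if k ∣ i then Ap.image ZMod.val else Finset.range p
      with hD
    have hDlt : ∀ i, ∀ x ∈ D i, x < p := by
      intro i x hx
      by_cases h : k ∣ i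
      · simp only [hD, if_pos h, Finset.mem_image] at hx
        obtain ⟨a, _, rfl⟩ := hx
        exact ZMod.val_lt a
      · simp only [hD, if_neg h, Finset.mem_range] at hx
        exact hx
    set g : ((a : ℕ) → a ∈ Finset.range L → ℕ) → ℕ :=
      fun f => 1 + ∑ i ∈ Finset.range L, (if h : i ∈ Finset.range L then f i h else 0) * p ^ i
      with hg
    have hmem : ∀ f ∈ (Finset.range L).pi D, g f ∈ A := by
      intro f hf
      refine ⟨fun i => if h : i ∈ Finset.range L then f i h else 0, ?_, ?_, rfl⟩
      · intro i
        by_cases h : i ∈ Finset.range L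
        · simp only [dif_pos h]
          exact hDlt i _ (Finset.mem_pi.mp hf i h)
        · simp only [dif_neg h]
          omega
      · intro i hiL hdvd
        have h : i ∈ Finset.range L := Finset.mem_range.mpr hiL
        simp only [dif_pos h]
        have hfi := Finset.mem_pi.mp hf i h
        simp only [hD, if_pos hdvd, Finset.mem_image] at hfi
        obtain ⟨a, ha, hav⟩ := hfi
        rw [← hav]
        simpa [ZMod.natCast_val, ZMod.cast_id] using ha
    have hinj : Set.InjOn g ↑((Finset.range L).pi D) := by
      intro f1 hf1 f2 hf2 hgeq
      have hlt : ∀ (f : (a : ℕ) → a ∈ Finset.range L → ℕ), f ∈ (Finset.range L).pi D →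
          ∀ i, (if h : i ∈ Finset.range L then f i h else 0) < p := by
        intro f hf i
        by_cases h : i ∈ Finset.range L
        · simp only [dif_pos h]; exact hDlt i _ (Finset.mem_pi.mp hf i h)
        · simp only [dif_neg h]; omega
      have hsum : ∑ i ∈ Finset.range L, (if h : i ∈ Finset.range L then f1 i h else 0) * p ^ i
          = ∑ i ∈ Finset.range L, (if h : i ∈ Finset.range L then f2 i h else 0) * p ^ i := by
        have := hgeq
        simp only [hg] at this
        omega
      have key := digits_unique hp2 L _ _
        (hlt f1 (by exact_mod_cast hf1)) (hlt f2 (by exact_mod_cast hf2)) hsum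
      funext a ha
      have h2 := key a (Finset.mem_range.mp ha)
      rwa [dif_pos ha, dif_pos ha] at h2
    set B := ((Finset.range L).pi D).image g with hB
    have hBcard : B.card = ∏ i ∈ Finset.range L, (D i).card := by
      rw [hB, Finset.card_image_of_injOn hinj, Finset.card_pi]
    have hm' : ((Finset.range L).filter (fun i => k ∣ i)).card = (L + k - 1) / k :=
      card_multiples_range hk
    have hmnot : ((Finset.range L).filter (fun i => ¬ k ∣ i)).card = L - (L + k - 1) / k := by
      have h := Finset.card_filter_add_card_filter_not
        (s := Finset.range L) (p := fun i => k ∣ i)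
      rw [Finset.card_range] at h
      omega
    have hprod : p ^ (L - (L + k - 1) / k) * k ^ ((L + k - 1) / k)
        ≤ ∏ i ∈ Finset.range L, (D i).card := by
      rw [← Finset.prod_filter_mul_prod_filter_not (Finset.range L) (fun i => k ∣ i)]
      have hp1 : ∏ i ∈ (Finset.range L).filter (fun i => k ∣ i), (D i).card
          = Ap.card ^ ((L + k - 1) / k) := by
        rw [← hm']
        rw [Finset.prod_congr rfl (fun i hi => ?_), Finset.prod_const]
        have hki : k ∣ i := (Finset.mem_filter.mp hi).2
        rw [hD]
        simp only [if_pos hki]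
        rw [Finset.card_image_of_injective _ (ZMod.val_injective p)]
      have hp2' : ∏ i ∈ (Finset.range L).filter (fun i => ¬ k ∣ i), (D i).card
          = p ^ (L - (L + k - 1) / k) := by
        rw [← hmnot]
        rw [Finset.prod_congr rfl (fun i hi => ?_), Finset.prod_const]
        have hki : ¬ k ∣ i := (Finset.mem_filter.mp hi).2
        rw [hD]
        simp only [if_neg hki]
        exact Finset.card_range p
      rw [hp1, hp2', mul_comm]
      exact Nat.mul_le_mul_right _ (Nat.pow_le_pow_left hcard _)
    have hBsub : ↑B ⊆ A := by
      intro n hn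
      simp only [hB, Finset.coe_image, Set.mem_image, Finset.mem_coe] at hn
      obtain ⟨f, hf, rfl⟩ := hn
      exact hmem f hf
    have hfinA : A.Finite := Set.Finite.subset (Set.finite_Icc 1 N) hsub
    calc p ^ (L - (L + k - 1) / k) * k ^ ((L + k - 1) / k)
        ≤ B.card := by rw [hBcard]; exact hprod
      _ = (↑B : Set ℕ).ncard := (Set.ncard_coe_finset B).symm
      _ ≤ A.ncard := Set.ncard_le_ncard hBsub hfinA
end

section
/- Fix d ≥ 1 and integers N, M, L ≥ 1 with N ≥ ML. Let P ⊆ [N]^d × [M] ⊆ ℤ^{d+1}, and suppose each p ∈ P has an integer direction s_p = (u_p, 1) ∈ ℤ^{d+1} with ‖u_p‖_∞ ≤ L such that p' ∉ p + ℝ·s_p for all distinct p, p' ∈ P. Then under the scaling map φ(n_1,...,n_d,m) = (n_1/N, ..., n_d/N, L·m/N), the points q_p = φ(p) in [0,1]^{d+1} with lines through q_p in direction φ(s_p) satisfy: for all distinct p, p', the ℓ∞-distance from φ(p') to the line through φ(p) in direction φ(s_p) is at least 1/(2N). -/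
/-- The scaling map `φ(n₁,…,n_d,m) = (n₁/N, …, n_d/N, L·m/N)` from `ℤ^{d+1}`
to `[0,1]^{d+1}`. -/
noncomputable def phiMap (d N L : ℕ) (x : Fin (d + 1) → ℤ) : Fin (d + 1) → ℝ :=
  fun i => if i = Fin.last d then (L : ℝ) * (x i : ℝ) / (N : ℝ) else (x i : ℝ) / (N : ℝ)

/-- Lattice matchings give separated Euclidean point–line configurations: if
`P ⊆ [N]^d × [M]` with `N ≥ ML`, and each `p ∈ P` has an integer direction
`s_p = (u_p, 1)` with `‖u_p‖_∞ ≤ L` such that no other point of `P` lies on the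
real line `p + ℝ s_p`, then after applying `φ`, the `ℓ∞`-distance from `φ(p')` to
the line through `φ(p)` in direction `φ(s_p)` is at least `1/(2N)` for `p ≠ p'`. -/
theorem stmt_16 (d N M L : ℕ) (hd : 1 ≤ d) (hN : 1 ≤ N) (hM : 1 ≤ M) (hL : 1 ≤ L)
    (hNML : M * L ≤ N)
    (P : Set (Fin (d + 1) → ℤ))
    (hPbox : ∀ p ∈ P, (∀ i : Fin d, p i.castSucc ∈ Set.Icc (1 : ℤ) (N : ℤ)) ∧
      p (Fin.last d) ∈ Set.Icc (1 : ℤ) (M : ℤ))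
    (s : (Fin (d + 1) → ℤ) → (Fin (d + 1) → ℤ))
    (hslast : ∀ p ∈ P, s p (Fin.last d) = 1)
    (hsbound : ∀ p ∈ P, ∀ i : Fin d, |s p i.castSucc| ≤ (L : ℤ))
    (hsep : ∀ p ∈ P, ∀ p' ∈ P, p ≠ p' → ∀ r : ℝ,
      (fun i => (p' i : ℝ)) ≠ fun i => (p i : ℝ) + r * (s p i : ℝ)) :
    ∀ p ∈ P, ∀ p' ∈ P, p ≠ p' → ∀ r : ℝ,
      (1 : ℝ) / (2 * N) ≤ ‖phiMap d N L p' - (phiMap d N L p + r • phiMap d N L (s p))‖ := by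
  intro p hp p' hp' hne r
  have hNpos : (0 : ℝ) < N := by exact_mod_cast hN
  have hLpos : (0 : ℝ) < L := by exact_mod_cast hL
  set t : ℤ := p' (Fin.last d) - p (Fin.last d) with ht
  by_cases hcase : (1 : ℝ) / (2 * L) ≤ |(t : ℝ) - r|
  · -- last coordinate
    have := norm_le_pi_norm
      (phiMap d N L p' - (phiMap d N L p + r • phiMap d N L (s p))) (Fin.last d)
    refine le_trans ?_ this
    simp only [Pi.sub_apply, Pi.add_apply, Pi.smul_apply, smul_eq_mul, phiMap, if_pos rfl,
      hslast p hp, Real.norm_eq_abs, if_true]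
    have hexp : (L : ℝ) * (p' (Fin.last d) : ℝ) / N -
        ((L : ℝ) * (p (Fin.last d) : ℝ) / N + r * ((L : ℝ) * ((1 : ℤ) : ℝ) / N))
        = (L : ℝ) * ((t : ℝ) - r) / N := by
      push_cast [ht]; ring
    rw [hexp, abs_div, abs_of_pos hNpos, abs_mul, abs_of_pos hLpos]
    rw [div_le_div_iff₀ (by positivity) hNpos]
    have : (1 : ℝ) ≤ L * (2 * |(t : ℝ) - r|) := by
      have := mul_le_mul_of_nonneg_left hcase (le_of_lt hLpos)
      calc (1 : ℝ) = L * (1 / (2 * L)) * 2 := by field_simp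
        _ ≤ L * |(t : ℝ) - r| * 2 := by nlinarith
        _ = L * (2 * |(t : ℝ) - r|) := by ring
    nlinarith
  · push_neg at hcase
    -- find a coordinate where the integer points differ at parameter t
    have hsep' := hsep p hp p' hp' hne (t : ℝ)
    rw [Function.ne_iff] at hsep'
    obtain ⟨i, hi⟩ := hsep'
    have hine : i ≠ Fin.last d := by
      intro h
      apply hi
      rw [h, hslast p hp]
      push_cast [ht]; ring
    obtain ⟨j, rfl⟩ : ∃ j : Fin d, i = j.castSucc := ⟨i.castPred hine, (Fin.castSucc_castPred i hine).symm⟩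
    have hint : p' (j.castSucc) ≠ p (j.castSucc) + t * s p (j.castSucc) := by
      intro h
      apply hi
      rw [h]; push_cast; ring
    have hint1 : (1 : ℤ) ≤ |p' (j.castSucc) - p (j.castSucc) - t * s p (j.castSucc)| := by
      apply Int.one_le_abs
      omega
    have := norm_le_pi_norm
      (phiMap d N L p' - (phiMap d N L p + r • phiMap d N L (s p))) (j.castSucc)
    refine le_trans ?_ this
    have hjne : j.castSucc ≠ Fin.last d := (Fin.castSucc_lt_last j).ne
    simp only [Pi.sub_apply, Pi.add_apply, Pi.smul_apply, smul_eq_mul, phiMap, if_neg hjne,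
      Real.norm_eq_abs]
    have hexp : (p' (j.castSucc) : ℝ) / N - ((p (j.castSucc) : ℝ) / N + r * ((s p (j.castSucc) : ℝ) / N))
        = (((p' (j.castSucc) - p (j.castSucc) - t * s p (j.castSucc) : ℤ) : ℝ)
          + ((t : ℝ) - r) * (s p (j.castSucc) : ℝ)) / N := by
      push_cast; ring
    rw [hexp, abs_div, abs_of_pos hNpos]
    have h1 : (1 : ℝ) ≤ |((p' (j.castSucc) - p (j.castSucc) - t * s p (j.castSucc) : ℤ) : ℝ)| := by
      rw [← Int.cast_abs]; exact_mod_cast hint1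
    have h2 : |((t : ℝ) - r) * (s p (j.castSucc) : ℝ)| < 1 / 2 := by
      rw [abs_mul]
      have hsb : |(s p (j.castSucc) : ℝ)| ≤ (L : ℝ) := by
        rw [← Int.cast_abs]; exact_mod_cast hsbound p hp j
      calc |(t : ℝ) - r| * |(s p (j.castSucc) : ℝ)|
          ≤ |(t : ℝ) - r| * L := by
            exact mul_le_mul_of_nonneg_left hsb (abs_nonneg _)
        _ < (1 / (2 * L)) * L := by
            exact mul_lt_mul_of_pos_right hcase hLpos
        _ = 1 / 2 := by field_simp
    have habs : (1 : ℝ) / 2 ≤ |((p' (j.castSucc) - p (j.castSucc) - t * s p (j.castSucc) : ℤ) : ℝ)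
        + ((t : ℝ) - r) * (s p (j.castSucc) : ℝ)| := by
      have h3 : |((p' (j.castSucc) - p (j.castSucc) - t * s p (j.castSucc) : ℤ) : ℝ)|
          ≤ |((p' (j.castSucc) - p (j.castSucc) - t * s p (j.castSucc) : ℤ) : ℝ)
            + ((t : ℝ) - r) * (s p (j.castSucc) : ℝ)| + |((t : ℝ) - r) * (s p (j.castSucc) : ℝ)| := by
        have := abs_add_le (((p' (j.castSucc) - p (j.castSucc) - t * s p (j.castSucc) : ℤ) : ℝ)
          + ((t : ℝ) - r) * (s p (j.castSucc) : ℝ)) (-(((t : ℝ) - r) * (s p (j.castSucc) : ℝ)))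
        simpa using this
      linarith
    rw [div_le_div_iff₀ (by positivity) hNpos]
    nlinarith
end

section
/- Let q be a prime power with odd characteristic and let a ∈ F_q^× be such that -a is a non-square in F_q. Let P = {(y² + a z², y, z) : y, z ∈ F_q} ⊂ F_q³, and for p = (x₀, y₀, z₀) ∈ P define the plane π_p = {(x,y,z) : x - 2y₀y - 2a z₀z = -y₀² - a z₀²}. Then p ∈ π_p and π_p ∩ P = {p} for every p ∈ P; hence the pairs (p, π_p) form an induced matching of size q² in the point-plane incidence graph of F_q³. -/
/-- The elliptic paraboloid construction: let `F` be a finite field of odd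
characteristic and `a ∈ F^×` with `-a` a non-square. For `P = {(y²+az², y, z)}`
and planes `π_{(x₀,y₀,z₀)} : x - 2y₀y - 2az₀z = -y₀² - az₀²`, each point of `P`
lies on its own plane, each plane meets `P` only at its own point, and
`|P| = q²`; hence the pairs `(p, π_p)` form an induced matching of size `q²` in
the point–plane incidence graph of `F³`. -/
theorem stmt_18 (F : Type*) [Field F] [Fintype F] (hchar : ringChar F ≠ 2)
    (a : F) (ha : a ≠ 0) (hns : ∀ s : F, -a ≠ s ^ 2) :
    (∀ y0 z0 : F,
      (y0 ^ 2 + a * z0 ^ 2) - 2 * y0 * y0 - 2 * a * z0 * z0 = -(y0 ^ 2 + a * z0 ^ 2)) ∧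
    (∀ y0 z0 y z : F,
      (y ^ 2 + a * z ^ 2) - 2 * y0 * y - 2 * a * z0 * z = -(y0 ^ 2 + a * z0 ^ 2) →
      y = y0 ∧ z = z0) ∧
    Set.ncard {v : F × F × F | v.1 = v.2.1 ^ 2 + a * v.2.2 ^ 2} = Fintype.card F ^ 2 := by
  refine ⟨fun y0 z0 => by ring, fun y0 z0 y z h => ?_, ?_⟩
  · have key : (y - y0) ^ 2 + a * (z - z0) ^ 2 = 0 := by linear_combination h
    have hz : z = z0 := by
      by_contra hz
      have hzz : z - z0 ≠ 0 := sub_ne_zero.mpr hz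
      apply hns ((y - y0) / (z - z0))
      field_simp
      linear_combination -key
    subst hz
    have : (y - y0) ^ 2 = 0 := by linear_combination key
    constructor
    · exact sub_eq_zero.mp (pow_eq_zero_iff (n := 2) (by norm_num) |>.mp this)
    · rfl
  · have : {v : F × F × F | v.1 = v.2.1 ^ 2 + a * v.2.2 ^ 2} =
        Set.range (fun p : F × F => (p.1 ^ 2 + a * p.2 ^ 2, p.1, p.2)) := by
      ext ⟨x, y, z⟩
      simp only [Set.mem_setOf_eq, Set.mem_range, Prod.mk.injEq]
      constructor
      · rintro rfl; exact ⟨(y, z), rfl, rfl, rfl⟩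
      · rintro ⟨⟨u, v⟩, h1, h2, h3⟩; subst h2; subst h3; exact h1.symm
    have hinj : Function.Injective (fun p : F × F => (p.1 ^ 2 + a * p.2 ^ 2, p.1, p.2)) :=
      fun p q hpq =>
        Prod.ext (congrArg (Prod.fst ∘ Prod.snd) hpq) (congrArg (Prod.snd ∘ Prod.snd) hpq)
    rw [this, ← Nat.card_coe_set_eq, Nat.card_range_of_injective hinj, Nat.card_prod,
      Nat.card_eq_fintype_card, sq]
end

section
/- Let q be a prime power and let N ⊂ F_q² be a Nikodym set. For each v ∈ F_q² fix a line ℓ_v through v whose punctured part lies in N, identify F_q² with the affine points of PG(2,q), and let L₀ = {ℓ_v : v ∈ F_q²} ∪ {ℓ_∞}. Then L₀ covers PG(2,q), for every v ∉ N the only line of L₀ containing v is ℓ_v, and hence any minimal subcover L ⊆ L₀ satisfies |L| ≥ q² - |N|. Consequently, the maximum size B(2,q) of a minimal line cover of PG(2,q) satisfies B(2,q) ≥ q² - Nikodym(2,q). -/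
/-- Incidence in `PG(2,q)`: a point and a line (both represented as elements of the
projectivization of `F³`, a line via the coefficients of its equation) are
incident iff the dot product of representatives vanishes (a scaling-invariant
condition). -/
def pgIncid (F : Type*) [Field F] (pt l : Projectivization F (Fin 3 → F)) : Prop :=
  ∑ i, pt.rep i * l.rep i = 0

/-- A family of lines covers `PG(2,q)` if every projective point lies on one of them. -/
def pgCovers (F : Type*) [Field F] (L : Set (Projectivization F (Fin 3 → F))) : Prop :=
  ∀ pt : Projectivization F (Fin 3 → F), ∃ l ∈ L, pgIncid F pt l

open Projectivization

section aux
variable {F : Type*} [Field F]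

lemma incid_mk (p a : Fin 3 → F) (hp : p ≠ 0) (ha : a ≠ 0) :
    pgIncid F (Projectivization.mk F p hp) (Projectivization.mk F a ha) ↔ ∑ i, p i * a i = 0 := by
  obtain ⟨c, hc⟩ := exists_smul_eq_mk_rep F p hp
  obtain ⟨d, hd⟩ := exists_smul_eq_mk_rep F a ha
  unfold pgIncid
  rw [← hc, ← hd]
  have : ∀ i, (c • p) i * (d • a) i = (c : F) * (d : F) * (p i * a i) := by
    intro i; simp [Units.smul_def, mul_mul_mul_comm]
  simp_rw [this, ← Finset.mul_sum]
  simp [c.ne_zero, d.ne_zero]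

def affPt (x : Fin 2 → F) : Fin 3 → F := ![x 0, x 1, 1]

lemma affPt_ne (x : Fin 2 → F) : affPt x ≠ 0 := fun h => by
  have := congrFun h 2; simp [affPt] at this

def lineCoef (x v : Fin 2 → F) : Fin 3 → F := ![v 1, -v 0, v 0 * x 1 - v 1 * x 0]

lemma lineCoef_ne (x v : Fin 2 → F) (hv : v ≠ 0) : lineCoef x v ≠ 0 := fun h => by
  have h0 := congrFun h 0; have h1 := congrFun h 1
  simp [lineCoef] at h0 h1
  exact hv (funext fun i => by fin_cases i <;> simp [h0, h1])

lemma par (v w : Fin 2 → F) (hv : v ≠ 0) :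
    w 0 * v 1 - w 1 * v 0 = 0 ↔ ∃ t : F, w = t • v := by
  constructor
  · intro h
    rcases ne_or_eq (v 0) 0 with h0 | h0
    · have key : w 1 = w 0 / v 0 * v 1 := by
        field_simp
        linear_combination -h
      refine ⟨w 0 / v 0, funext fun i => ?_⟩
      fin_cases i
      · simp [div_mul_cancel₀, h0]
      · simpa using key
    · have h1 : v 1 ≠ 0 := by
        intro h1; exact hv (funext fun i => by fin_cases i <;> simp [h0, h1])
      have hh : w 0 * v 1 = 0 := by linear_combination h + w 1 * h0
      have hw0 : w 0 = 0 := (mul_eq_zero.1 hh).resolve_right h1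
      refine ⟨w 1 / v 1, funext fun i => ?_⟩
      fin_cases i
      · simp [hw0, h0]
      · simp [div_mul_cancel₀, h1]
  · rintro ⟨t, rfl⟩; simp; ring

lemma incid_aff_line (y x v : Fin 2 → F) (hv : v ≠ 0) :
    pgIncid F (Projectivization.mk F (affPt y) (affPt_ne y))
      (Projectivization.mk F (lineCoef x v) (lineCoef_ne x v hv)) ↔
    ∃ t : F, y = x + t • v := by
  rw [incid_mk]
  have : ∑ i, affPt y i * lineCoef x v i = (y - x) 0 * v 1 - (y - x) 1 * v 0 := by
    simp [Fin.sum_univ_three, affPt, lineCoef]; ring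
  rw [this, par v (y - x) hv]
  constructor
  · rintro ⟨t, ht⟩; exact ⟨t, by rw [← ht]; abel⟩
  · rintro ⟨t, ht⟩; exact ⟨t, by rw [ht]; abel⟩

end aux


/-- Minimal covers from Nikodym sets: if `N ⊆ F_q²` is a Nikodym set (through every
point `v` there is a line whose punctured part lies in `N`), then there is a
minimal line cover `L` of `PG(2,q)` with `|L| ≥ q² - |N|`. Consequently
`B(2,q) ≥ q² - Nikodym(2,q)`. -/
theorem stmt_19 (F : Type*) [Field F] [Fintype F]
    (N : Set (Fin 2 → F))
    (hN : ∀ x : Fin 2 → F, ∃ v : Fin 2 → F, v ≠ 0 ∧ ∀ t : F, t ≠ 0 → x + t • v ∈ N) :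
    ∃ L : Set (Projectivization F (Fin 3 → F)),
      pgCovers F L ∧ (∀ L' ⊆ L, pgCovers F L' → L' = L) ∧
      Fintype.card F ^ 2 - N.ncard ≤ L.ncard := by
  classical
  choose f hf1 hf2 using hN
  set lineP : (Fin 2 → F) → Projectivization F (Fin 3 → F) :=
    fun x => Projectivization.mk F (lineCoef x (f x)) (lineCoef_ne x (f x) (hf1 x)) with hlineP
  have hinf : (![0,0,1] : Fin 3 → F) ≠ 0 := fun h => by
    have := congrFun h 2; simp at this
  set linfP : Projectivization F (Fin 3 → F) := Projectivization.mk F ![0,0,1] hinf with hlinfP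
  set L₀ : Set (Projectivization F (Fin 3 → F)) := insert linfP (Set.range lineP) with hL₀
  -- uniqueness: for y ∉ N, if affine point y is on lineP x, then x = y
  have huniq : ∀ y ∉ N, ∀ x : Fin 2 → F,
      pgIncid F (Projectivization.mk F (affPt y) (affPt_ne y)) (lineP x) → x = y := by
    intro y hy x hinc
    rw [hlineP] at hinc
    rw [incid_aff_line y x (f x) (hf1 x)] at hinc
    obtain ⟨t, ht⟩ := hinc
    rcases eq_or_ne t 0 with rfl | htne
    · simp at ht; exact ht.symm
    · have := hf2 x t htne
      rw [← ht] at this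
      exact absurd this hy
  -- L₀ covers
  have hcov : pgCovers F L₀ := by
    intro pt
    rcases eq_or_ne (pt.rep 2) 0 with h2 | h2
    · refine ⟨linfP, Set.mem_insert _ _, ?_⟩
      conv_lhs => rw [← pt.mk_rep]
      rw [hlinfP, incid_mk]
      simp [Fin.sum_univ_three, h2]
    · set x : Fin 2 → F := ![pt.rep 0 / pt.rep 2, pt.rep 1 / pt.rep 2] with hx
      have hpt : pt = Projectivization.mk F (affPt x) (affPt_ne x) := by
        conv_lhs => rw [← pt.mk_rep]
        rw [Projectivization.mk_eq_mk_iff]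
        refine ⟨Units.mk0 (pt.rep 2) h2, funext fun i => ?_⟩
        fin_cases i <;>
          simp [affPt, hx, Units.smul_def, mul_div_cancel₀, mul_comm, h2] <;>
          field_simp
      refine ⟨lineP x, Set.mem_insert_of_mem _ ⟨x, rfl⟩, ?_⟩
      rw [hpt, hlineP, incid_aff_line x x (f x) (hf1 x)]
      exact ⟨0, by simp⟩
  -- for any subcover L and y ∉ N, lineP y ∈ L
  have hforce : ∀ L ⊆ L₀, pgCovers F L → ∀ y ∉ N, lineP y ∈ L := by
    intro L hLsub hLcov y hy
    obtain ⟨l, hlL, hlinc⟩ := hLcov (Projectivization.mk F (affPt y) (affPt_ne y))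
    rcases hLsub hlL with rfl | ⟨x, rfl⟩
    · rw [hlinfP, incid_mk] at hlinc
      simp [Fin.sum_univ_three, affPt] at hlinc
    · rwa [huniq y hy x hlinc] at hlL
  -- extract a minimal subcover via minimal ncard
  haveI : Finite (Projectivization F (Fin 3 → F)) := Quotient.finite _
  have hfin : ∀ L : Set (Projectivization F (Fin 3 → F)), L.Finite := fun L => Set.toFinite L
  set S : Set ℕ := {n | ∃ L ⊆ L₀, pgCovers F L ∧ L.ncard = n} with hS
  have hSne : S.Nonempty := ⟨L₀.ncard, L₀, le_refl _, hcov, rfl⟩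
  obtain ⟨L, hLsub, hLcov, hLcard⟩ := Nat.sInf_mem hSne
  refine ⟨L, hLcov, ?_, ?_⟩
  · intro L' hL' hL'cov
    have : sInf S ≤ L'.ncard := Nat.sInf_le ⟨L', hL'.trans hLsub, hL'cov, rfl⟩
    exact Set.eq_of_subset_of_ncard_le hL' (hLcard ▸ this) (hfin L)
  · have himg : lineP '' Nᶜ ⊆ L := by
      rintro _ ⟨y, hy, rfl⟩; exact hforce L hLsub hLcov y hy
    have hinj : Set.InjOn lineP Nᶜ := by
      intro y hy y' hy' heq
      have : pgIncid F (Projectivization.mk F (affPt y) (affPt_ne y)) (lineP y) := by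
        rw [hlineP, incid_aff_line y y (f y) (hf1 y)]; exact ⟨0, by simp⟩
      rw [heq] at this
      exact (huniq y hy y' this).symm
    have h1 : Nᶜ.ncard ≤ L.ncard := by
      rw [← Set.ncard_image_of_injOn hinj]
      exact Set.ncard_le_ncard himg (hfin L)
    have h2 : N.ncard + Nᶜ.ncard = Nat.card (Fin 2 → F) := Set.ncard_add_ncard_compl N
    have h3 : Nat.card (Fin 2 → F) = Fintype.card F ^ 2 := by
      simp [Nat.card_eq_fintype_card]
    omega
end
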